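/- Hom computation: for j ≤ j' in J, Hom_C(M^{j'}, M^j) ≅ k_{j'} as k_{j'}-vector spaces, via φ ↦ φ_{j'}(1). -/

import Mathlib

set_option linter.unusedVariables false

structure ChainObj {J : Type} [LinearOrder J] (k : J → Type) [∀ i, Field (k i)]
    (f : ∀ i j, i ≤ j → k i →+* k j) where
  V : J → Type
  [acg : ∀ i, AddCommGroup (V i)]
  [mod : ∀ i, Module (k i) (V i)]
  t : ∀ i j (h : i ≤ j), V i →ₛₗ[f i j h] V j
  t_id : ∀ i (x : V i), t i i le_rfl x = x
  t_comp : ∀ i j l (h₁ : i ≤ j) (h₂ : j ≤ l) (x : V i),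
    t j l h₂ (t i j h₁ x) = t i l (h₁.trans h₂) x

attribute [instance] ChainObj.acg ChainObj.mod

variable {J : Type} [LinearOrder J] {k : J → Type} [∀ i, Field (k i)]
  {f : ∀ i j, i ≤ j → k i →+* k j}

@[ext]
structure ChainHom (V W : ChainObj k f) where
  app : ∀ i, V.V i →ₗ[k i] W.V i
  comm : ∀ i j (h : i ≤ j) (x : V.V i), W.t i j h (app i x) = app j (V.t i j h x)

def ChainHom.comp {U V W : ChainObj k f} (g : ChainHom V W) (h : ChainHom U V) :
    ChainHom U W where
  app i := (g.app i).comp (h.app i)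
  comm i j hij x := by simp [g.comm, h.comm]

def ChainHom.id (V : ChainObj k f) : ChainHom V V where
  app i := LinearMap.id
  comm i j hij x := rfl

def ChainHom.zero (V W : ChainObj k f) : ChainHom V W where
  app i := 0
  comm i j hij x := by simp

/-- An object `V` is `α`-grounded if for every `β > α` the component `V β` is spanned
over `k β` by the image of the transition map from level `α`. -/
def IsGrounded (α : J) (V : ChainObj k f) : Prop :=
  ∀ β (h : α < β), Submodule.span (k β) (Set.range (V.t α β h.le)) = ⊤

/-- The component submodule of the representing object `M^j`: zero below `j`, everything
from `j` on. -/
def MjSub (k : J → Type) [∀ i, Field (k i)] (j i : J) : Submodule (k i) (k i) :=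
  if i < j then ⊥ else ⊤

theorem one_mem_MjSub {j i : J} (h : j ≤ i) : (1 : k i) ∈ MjSub k j i := by
  simp [MjSub, not_lt.mpr h]

/-- The object `M^j`, with `M^j_i = 0` for `i < j` and `M^j_i = k_i` for `i ≥ j`, the
transition maps being the field inclusions. -/
def Mj (hf_id : ∀ i (x : k i), f i i le_rfl x = x)
    (hf_comp : ∀ i j l (h₁ : i ≤ j) (h₂ : j ≤ l) (x : k i),
      f j l h₂ (f i j h₁ x) = f i l (h₁.trans h₂) x)
    (j : J) : ChainObj k f where
  V i := MjSub k j i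
  t i i' h :=
    { toFun := fun x => ⟨f i i' h x.1, by
        by_cases h' : i' < j
        · have hx : x.1 = 0 := by
            have hx2 := x.2
            simp only [MjSub, if_pos (lt_of_le_of_lt h h'), Submodule.mem_bot] at hx2
            exact hx2
          simp [MjSub, if_pos h', hx]
        · simp [MjSub, if_neg h']⟩
      map_add' := by intro a b; apply Subtype.ext; simp
      map_smul' := by intro c a; apply Subtype.ext; simp [Submodule.coe_smul] }
  t_id i x := by apply Subtype.ext; simp [hf_id]
  t_comp i j' l h₁ h₂ x := by apply Subtype.ext; simp [hf_comp]

/-- Hom computation: for `j ≤ j'`, `Hom_C(M^{j'}, M^j) ≅ k_{j'}` via `φ ↦ φ_{j'}(1)`. -/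
theorem stmt15
    (hf_id : ∀ i (x : k i), f i i le_rfl x = x)
    (hf_comp : ∀ i j l (h₁ : i ≤ j) (h₂ : j ≤ l) (x : k i),
      f j l h₂ (f i j h₁ x) = f i l (h₁.trans h₂) x)
    (j j' : J) (hjj' : j ≤ j') :
    Function.Bijective
      (fun φ : ChainHom (Mj hf_id hf_comp j') (Mj hf_id hf_comp j) =>
        ((φ.app j' ⟨1, one_mem_MjSub le_rfl⟩).1 : k j')) := by

  constructor
  · intro φ ψ h
    simp only at h
    ext i x
    rcases lt_or_ge i j' with hi | hi
    · have hx : x = 0 := by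
        apply Subtype.ext
        have hx2 := x.2
        simp only [MjSub, if_pos hi, Submodule.mem_bot] at hx2
        exact hx2
      rw [hx, map_zero, map_zero]
    · have key : ∀ χ : ChainHom (Mj hf_id hf_comp j') (Mj hf_id hf_comp j),
          χ.app i x = x.1 • (Mj hf_id hf_comp j).t j' i hi
            (χ.app j' ⟨1, one_mem_MjSub le_rfl⟩) := by
        intro χ
        have h1 : x = x.1 • (Mj hf_id hf_comp j').t j' i hi ⟨1, one_mem_MjSub le_rfl⟩ := by
          apply Subtype.ext
          show x.1 = x.1 • (f j' i hi 1)
          simp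
        conv_lhs => rw [h1]
        rw [map_smul]; exact congrArg (x.1 • ·) (χ.comm j' i hi _).symm
      rw [key φ, key ψ]
      congr 1
      congr 1
      exact Subtype.ext h
  · intro c
    have hmem : ∀ i (x : (Mj hf_id hf_comp j').V i),
        x.1 * (if h : j' ≤ i then f j' i h c else 0) ∈ MjSub k j i := by
      intro i x
      by_cases hij : i < j
      · have hx : x.1 = 0 := by
          have hx2 := x.2
          simp only [MjSub, if_pos (lt_of_lt_of_le hij hjj'), Submodule.mem_bot] at hx2
          exact hx2
        simp [MjSub, if_pos hij, hx]
      · simp [MjSub, if_neg hij]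
    refine ⟨⟨fun i =>
      { toFun := fun x => ⟨x.1 * (if h : j' ≤ i then f j' i h c else 0), hmem i x⟩
        map_add' := fun a b => Subtype.ext (add_mul a.1 b.1 _)
        map_smul' := fun a b => Subtype.ext (mul_assoc a b.1 _)
      }, ?_⟩, ?_⟩
    · intro i i' h x
      apply Subtype.ext
      show f i i' h (x.1 * _) = f i i' h x.1 * _
      by_cases hi : j' ≤ i
      · rw [dif_pos hi, dif_pos (hi.trans h), map_mul, hf_comp]
      · have hx : x.1 = 0 := by
          have hx2 := x.2
          simp only [MjSub, if_pos (lt_of_not_ge hi), Submodule.mem_bot] at hx2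
          exact hx2
        simp [hx]
    · show (1 : k j') * _ = c
      rw [dif_pos le_rfl, one_mul, hf_id]
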